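/- For a real number a > 0 and real ξ, ∫_{-∞}^{∞} |Γ(a + it)|² e^{-iξt} dt = √π Γ(a) Γ(a + 1/2) (cosh(ξ/2))^{-2a}. -/

import Mathlib

open Complex Real MeasureTheory Set
open scoped FourierTransform

noncomputable section

namespace RamanujanAux

def u (x : ℝ) : ℝ := 2 * Real.cosh (x / 2)

def G (a x : ℝ) : ℝ := u x ^ (-(2 * a))

def G₁ (a x : ℝ) : ℝ := -(2 * a) * (u x ^ (-(2 * a) - 1) * Real.sinh (x / 2))

def G₂ (a x : ℝ) : ℝ :=
  -(2 * a) * ((-(2 * a) - 1) * u x ^ (-(2 * a) - 1 - 1) * Real.sinh (x / 2) * Real.sinh (x / 2)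
    + u x ^ (-(2 * a) - 1) * (Real.cosh (x / 2) * (1 / 2)))

lemma u_pos (x : ℝ) : 0 < u x := by
  have := Real.cosh_pos (x := x / 2); unfold u; linarith

lemma exp_abs_le (x : ℝ) : Real.exp (|x| / 2) ≤ u x := by
  unfold u
  rw [Real.cosh_eq]
  rcases abs_cases x with ⟨h, _⟩ | ⟨h, _⟩ <;> rw [h] <;>
    [skip; rw [show -x / 2 = -(x/2) by ring]] <;>
    nlinarith [Real.exp_pos (x / 2), Real.exp_pos (-(x / 2))]

lemma G_pos (a : ℝ) (x : ℝ) : 0 < G a x := Real.rpow_pos_of_pos (u_pos x) _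

lemma G_le_exp {a : ℝ} (ha : 0 < a) (x : ℝ) : G a x ≤ Real.exp (-(a * |x|)) := by
  have h1 : u x ^ (-(2 * a)) ≤ (Real.exp (|x| / 2)) ^ (-(2 * a)) :=
    Real.rpow_le_rpow_of_nonpos (Real.exp_pos _) (exp_abs_le x) (by linarith)
  have h2 : (Real.exp (|x| / 2)) ^ (-(2 * a)) = Real.exp (-(a * |x|)) := by
    rw [← Real.exp_mul]; ring_nf
  rw [← h2]; exact h1

lemma hasDerivAt_u (x : ℝ) : HasDerivAt u (Real.sinh (x / 2)) x := by
  have h : HasDerivAt (fun y : ℝ => y / 2) (1 / 2) x := (hasDerivAt_id x).div_const 2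
  have h2 := (Real.hasDerivAt_cosh (x / 2)).comp x h
  have h3 := h2.const_mul 2
  refine h3.congr_deriv ?_; ring

lemma hasDerivAt_upow (p : ℝ) (x : ℝ) :
    HasDerivAt (fun y => u y ^ p) (p * u x ^ (p - 1) * Real.sinh (x / 2)) x := by
  have := (hasDerivAt_u x).rpow_const (p := p) (Or.inl (u_pos x).ne')
  convert this using 1; ring

lemma hasDerivAt_sinh2 (x : ℝ) :
    HasDerivAt (fun y : ℝ => Real.sinh (y / 2)) (Real.cosh (x / 2) * (1 / 2)) x := by
  have h : HasDerivAt (fun y : ℝ => y / 2) (1 / 2) x := (hasDerivAt_id x).div_const 2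
  exact (Real.hasDerivAt_sinh (x / 2)).comp x h

lemma hasDerivAt_G (a : ℝ) (x : ℝ) : HasDerivAt (G a) (G₁ a x) x := by
  have := hasDerivAt_upow (-(2 * a)) x
  unfold G G₁; convert this using 1; rw [mul_assoc]

lemma hasDerivAt_G₁ (a : ℝ) (x : ℝ) : HasDerivAt (G₁ a) (G₂ a x) x := by
  have h := ((hasDerivAt_upow (-(2 * a) - 1) x).mul (hasDerivAt_sinh2 x)).const_mul (-(2 * a))
  unfold G₁ G₂; exact h

lemma abs_sinh_le_cosh (y : ℝ) : |Real.sinh y| ≤ Real.cosh y := by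
  rw [abs_le]
  constructor
  · have := Real.cosh_add_sinh y;  nlinarith [Real.exp_pos y]
  · have := Real.cosh_sub_sinh y;  nlinarith [Real.exp_pos (-y)]

lemma upow_mul_u (p : ℝ) (x : ℝ) : u x ^ p * u x = u x ^ (p + 1) := by
  rw [Real.rpow_add_one (u_pos x).ne']

lemma G₁_abs_le {a : ℝ} (ha : 0 < a) (x : ℝ) : |G₁ a x| ≤ a * G a x := by
  have hup : 0 < u x ^ (-(2 * a) - 1) := Real.rpow_pos_of_pos (u_pos x) _
  have hs : |Real.sinh (x / 2)| ≤ u x / 2 := by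
    have := abs_sinh_le_cosh (x / 2); unfold u; linarith
  have key : u x ^ (-(2 * a) - 1) * u x = G a x := by
    rw [upow_mul_u]; unfold G; ring_nf
  unfold G₁
  rw [abs_mul, abs_mul, abs_of_pos hup]
  have h0 : 0 ≤ |Real.sinh (x/2)| := abs_nonneg _
  calc |(-(2 * a))| * (u x ^ (-(2 * a) - 1) * |Real.sinh (x / 2)|)
      ≤ (2 * a) * (u x ^ (-(2 * a) - 1) * (u x / 2)) := by
        rw [abs_of_neg (by linarith : -(2*a) < 0), neg_neg]
        have := mul_le_mul_of_nonneg_left hs hup.le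
        nlinarith
    _ = a * G a x := by rw [← key]; ring

lemma G₂_abs_le {a : ℝ} (ha : 0 < a) (x : ℝ) : |G₂ a x| ≤ (a * (2 * a + 1) / 2 + a / 2) * G a x := by
  have hup1 : 0 < u x ^ (-(2 * a) - 1) := Real.rpow_pos_of_pos (u_pos x) _
  have hup2 : 0 < u x ^ (-(2 * a) - 1 - 1) := Real.rpow_pos_of_pos (u_pos x) _
  have hu0 : 0 < u x := u_pos x
  have hs : |Real.sinh (x / 2)| ≤ u x / 2 := by
    have := abs_sinh_le_cosh (x / 2); unfold u; linarith
  have hc : Real.cosh (x / 2) = u x / 2 := by unfold u; ring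
  have key1 : u x ^ (-(2 * a) - 1) * u x = G a x := by
    rw [upow_mul_u]; unfold G; ring_nf
  have key2 : u x ^ (-(2 * a) - 1 - 1) * u x * u x = G a x := by
    rw [upow_mul_u, upow_mul_u]; unfold G; ring_nf
  have hss : Real.sinh (x / 2) * Real.sinh (x / 2) ≤ (u x / 2) * (u x / 2) := by
    have h2 := abs_mul_abs_self (Real.sinh (x / 2))
    nlinarith [abs_nonneg (Real.sinh (x / 2))]
  have hss0 : 0 ≤ Real.sinh (x / 2) * Real.sinh (x / 2) := mul_self_nonneg _
  unfold G₂
  rw [abs_mul]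
  rw [abs_of_neg (by linarith : -(2 * a) < 0), neg_neg]
  have habs : |(-(2 * a) - 1) * u x ^ (-(2 * a) - 1 - 1) * Real.sinh (x / 2) * Real.sinh (x / 2)
      + u x ^ (-(2 * a) - 1) * (Real.cosh (x / 2) * (1 / 2))|
      ≤ (2 * a + 1) * (u x ^ (-(2 * a) - 1 - 1) * (Real.sinh (x / 2) * Real.sinh (x / 2)))
        + u x ^ (-(2 * a) - 1) * (u x / 4) := by
    have h1 : |(-(2 * a) - 1) * u x ^ (-(2 * a) - 1 - 1) * Real.sinh (x / 2) * Real.sinh (x / 2)|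
        = (2 * a + 1) * (u x ^ (-(2 * a) - 1 - 1) * (Real.sinh (x / 2) * Real.sinh (x / 2))) := by
      rw [abs_mul, abs_mul, abs_mul, abs_of_neg (by linarith : -(2 * a) - 1 < 0),
        abs_of_pos hup2]
      rw [show -(-(2 * a) - 1) * u x ^ (-(2 * a) - 1 - 1) * |Real.sinh (x / 2)| * |Real.sinh (x / 2)|
        = (2 * a + 1) * (u x ^ (-(2 * a) - 1 - 1) * (|Real.sinh (x / 2)| * |Real.sinh (x / 2)|)) from by ring,
        abs_mul_abs_self]
    have h2 : |u x ^ (-(2 * a) - 1) * (Real.cosh (x / 2) * (1 / 2))|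
        = u x ^ (-(2 * a) - 1) * (u x / 4) := by
      rw [abs_of_pos (by positivity), hc]; ring
    calc _ ≤ _ := abs_add_le _ _
      _ = _ := by rw [h1, h2]
  calc 2 * a * |(-(2 * a) - 1) * u x ^ (-(2 * a) - 1 - 1) * Real.sinh (x / 2) * Real.sinh (x / 2)
      + u x ^ (-(2 * a) - 1) * (Real.cosh (x / 2) * (1 / 2))|
      ≤ 2 * a * ((2 * a + 1) * (u x ^ (-(2 * a) - 1 - 1) * ((u x / 2) * (u x / 2)))
        + u x ^ (-(2 * a) - 1) * (u x / 4)) := by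
        have := habs
        have hmono : (2 * a + 1) * (u x ^ (-(2 * a) - 1 - 1) * (Real.sinh (x / 2) * Real.sinh (x / 2)))
            ≤ (2 * a + 1) * (u x ^ (-(2 * a) - 1 - 1) * ((u x / 2) * (u x / 2))) := by
          apply mul_le_mul_of_nonneg_left _ (by linarith)
          exact mul_le_mul_of_nonneg_left hss hup2.le
        nlinarith
    _ = (a * (2 * a + 1) / 2 + a / 2) * G a x := by
        linear_combination (a * (2 * a + 1) / 2) * key2 + (a / 2) * key1

lemma integrable_exp_neg_abs {a : ℝ} (ha : 0 < a) :
    Integrable (fun x : ℝ => Real.exp (-(a * |x|))) := by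
  have h1 : IntegrableOn (fun x : ℝ => Real.exp (-(a * |x|))) (Ioi 0) := by
    apply ((exp_neg_integrableOn_Ioi 0 ha).congr_fun ?_ measurableSet_Ioi)
    intro x hx
    simp only
    rw [abs_of_pos hx]
    ring_nf
  have h2 : IntegrableOn (fun x : ℝ => Real.exp (-(a * |x|))) (Iic 0) := by
    rw [← Measure.map_neg_eq_self (volume : Measure ℝ)]
    have m : MeasurableEmbedding fun x : ℝ => -x := (Homeomorph.neg ℝ).measurableEmbedding
    rw [m.integrableOn_map_iff]
    simp_rw [Function.comp_def, abs_neg, neg_preimage, neg_Iic, neg_zero]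
    exact Iff.mpr integrableOn_Ici_iff_integrableOn_Ioi h1
  rw [← integrableOn_univ, ← Iic_union_Ioi (a := (0 : ℝ))]
  exact h2.union h1

lemma continuous_u : Continuous u := by
  unfold u; fun_prop

lemma continuous_G (a : ℝ) : Continuous (G a) := by
  unfold G
  exact continuous_u.rpow_const (fun x => Or.inl (u_pos x).ne')

lemma continuous_G₁ (a : ℝ) : Continuous (G₁ a) := by
  have h := fun x => (hasDerivAt_G₁ a x).differentiableAt
  exact Differentiable.continuous h

lemma integrable_G {a : ℝ} (ha : 0 < a) : Integrable (G a) := by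
  apply (integrable_exp_neg_abs ha).mono' (continuous_G a).aestronglyMeasurable
  filter_upwards with x
  rw [Real.norm_eq_abs, abs_of_pos (G_pos a x)]
  exact G_le_exp ha x

lemma integrable_G₁ {a : ℝ} (ha : 0 < a) : Integrable (G₁ a) := by
  apply ((integrable_G ha).const_mul a).mono' (continuous_G₁ a).aestronglyMeasurable
  filter_upwards with x
  rw [Real.norm_eq_abs]
  exact G₁_abs_le ha x

lemma continuous_G₂ (a : ℝ) : Continuous (G₂ a) := by
  unfold G₂
  have h1 : Continuous fun x : ℝ => u x ^ (-(2 * a) - 1 - 1) :=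
    continuous_u.rpow_const (fun x => Or.inl (u_pos x).ne')
  have h2 : Continuous fun x : ℝ => u x ^ (-(2 * a) - 1) :=
    continuous_u.rpow_const (fun x => Or.inl (u_pos x).ne')
  have hs : Continuous fun x : ℝ => Real.sinh (x / 2) :=
    Real.continuous_sinh.comp (continuous_id.div_const 2)
  have hch : Continuous fun x : ℝ => Real.cosh (x / 2) :=
    Real.continuous_cosh.comp (continuous_id.div_const 2)
  fun_prop

lemma integrable_G₂ {a : ℝ} (ha : 0 < a) : Integrable (G₂ a) := by
  apply ((integrable_G ha).const_mul (a * (2 * a + 1) / 2 + a / 2)).mono'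
    (continuous_G₂ a).aestronglyMeasurable
  filter_upwards with x
  rw [Real.norm_eq_abs]
  exact G₂_abs_le ha x

def g (a : ℝ) (x : ℝ) : ℂ := (G a x : ℂ)

lemma integrable_g {a : ℝ} (ha : 0 < a) : Integrable (g a) := (integrable_G ha).ofReal

lemma hasDerivAt_g (a : ℝ) (x : ℝ) : HasDerivAt (g a) ((G₁ a x : ℝ) : ℂ) x :=
  (hasDerivAt_G a x).ofReal_comp

lemma differentiable_g (a : ℝ) : Differentiable ℝ (g a) :=
  fun x => (hasDerivAt_g a x).differentiableAt

lemma deriv_g (a : ℝ) : deriv (g a) = fun x => ((G₁ a x : ℝ) : ℂ) :=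
  funext fun x => (hasDerivAt_g a x).deriv

def g₁ (a : ℝ) (x : ℝ) : ℂ := (G₁ a x : ℂ)

lemma hasDerivAt_g₁ (a : ℝ) (x : ℝ) : HasDerivAt (g₁ a) ((G₂ a x : ℝ) : ℂ) x :=
  (hasDerivAt_G₁ a x).ofReal_comp

lemma fourier_g₂_eq {a : ℝ} (ha : 0 < a) :
    𝓕 (fun x => ((G₂ a x : ℝ) : ℂ)) = fun w : ℝ =>
      (2 * π * Complex.I * w) • (2 * π * Complex.I * w) • 𝓕 (g a) w := by
  have h1 : 𝓕 (deriv (g a)) = fun w : ℝ => (2 * π * Complex.I * w) • 𝓕 (g a) w :=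
    Real.fourier_deriv (integrable_g ha) (differentiable_g a)
      (by rw [deriv_g a]; exact (integrable_G₁ ha).ofReal)
  have hg1 : 𝓕 (g₁ a) = fun w : ℝ => (2 * π * Complex.I * w) • 𝓕 (g a) w := by
    rw [← h1, deriv_g a]; rfl
  have hd1 : Differentiable ℝ (g₁ a) := fun x => (hasDerivAt_g₁ a x).differentiableAt
  have hderiv1 : deriv (g₁ a) = fun x => ((G₂ a x : ℝ) : ℂ) :=
    funext fun x => (hasDerivAt_g₁ a x).deriv
  have h2 : 𝓕 (deriv (g₁ a)) = fun w : ℝ => (2 * π * Complex.I * w) • 𝓕 (g₁ a) w :=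
    Real.fourier_deriv ((integrable_G₁ ha).ofReal) hd1
      (by rw [hderiv1]; exact (integrable_G₂ ha).ofReal)
  rw [← hderiv1, h2, hg1]

lemma norm_fourier_le (f : ℝ → ℂ) (w : ℝ) : ‖𝓕 f w‖ ≤ ∫ x : ℝ, ‖f x‖ :=
  VectorFourier.norm_fourierIntegral_le_integral_norm _ _ _ _ _

lemma continuous_fourier {f : ℝ → ℂ} (hf : Integrable f) : Continuous (𝓕 f) :=
  VectorFourier.fourierIntegral_continuous (L := innerₗ ℝ) Real.continuous_fourierChar
    (by exact continuous_inner) hf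

lemma fourier_g_decay {a : ℝ} (ha : 0 < a) {w : ℝ} (hw : w ≠ 0) :
    ‖𝓕 (g a) w‖ ≤ ((∫ x : ℝ, ‖((G₂ a x : ℝ) : ℂ)‖) / (4 * π ^ 2)) / w ^ 2 := by
  have hkey := congrFun (fourier_g₂_eq ha) w
  have hne : (2 * π * Complex.I * w) ≠ 0 := by
    simp [Complex.ext_iff, Real.pi_ne_zero, hw]
  have : 𝓕 (g a) w = 𝓕 (fun x => ((G₂ a x : ℝ) : ℂ)) w / (2 * π * Complex.I * w) ^ 2 := by
    rw [hkey, smul_smul, smul_eq_mul]; field_simp; rw [mul_div_cancel_right₀ _ (Complex.ofReal_ne_zero.mpr hw)]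
  rw [this]
  rw [norm_div, norm_pow]
  have hnorm : ‖(2 * π * Complex.I * (w : ℂ))‖ = 2 * π * |w| := by
    simp [norm_mul, Complex.norm_real, abs_of_pos Real.pi_pos]
  rw [hnorm]
  have hb := norm_fourier_le (fun x => ((G₂ a x : ℝ) : ℂ)) w
  have hpos : (0 : ℝ) < (2 * π * |w|) ^ 2 := by positivity
  rw [div_le_div_iff₀ hpos (by positivity : (0:ℝ) < w ^ 2)]
  have hsq : (2 * π * |w|) ^ 2 = 4 * π ^ 2 * w ^ 2 := by
    rw [mul_pow, mul_pow, _root_.sq_abs]; ring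
  calc ‖𝓕 (fun x => ((G₂ a x : ℝ) : ℂ)) w‖ * w ^ 2
      ≤ (∫ x : ℝ, ‖((G₂ a x : ℝ) : ℂ)‖) * w ^ 2 := by
        apply mul_le_mul_of_nonneg_right hb (sq_nonneg w)
    _ = (∫ x : ℝ, ‖((G₂ a x : ℝ) : ℂ)‖) / (4 * π ^ 2) * (2 * π * |w|) ^ 2 := by
        rw [hsq]; field_simp

lemma integrable_of_decay (h : ℝ → ℂ) (hc : Continuous h) (M : ℝ)
    (hb : ∀ w : ℝ, w ≠ 0 → ‖h w‖ ≤ M / w ^ 2) : Integrable h := by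
  have key : ∀ h' : ℝ → ℂ, Continuous h' → (∀ w : ℝ, 1 ≤ w → ‖h' w‖ ≤ M / w ^ 2) →
      IntegrableOn h' (Ioi 1) := by
    intro h' hc' hb'
    have hint : IntegrableOn (fun w : ℝ => M * w ^ (-2 : ℝ)) (Ioi 1) :=
      (integrableOn_Ioi_rpow_of_lt (by norm_num) one_pos).const_mul M
    apply hint.mono' hc'.aestronglyMeasurable.restrict
    filter_upwards [ae_restrict_mem measurableSet_Ioi] with w hw
    have hw0 : (0 : ℝ) < w := lt_trans one_pos hw
    have hM : 0 ≤ M := by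
      have h1 := hb 1 one_ne_zero
      have h2 := norm_nonneg (h 1)
      rw [one_pow, div_one] at h1
      linarith
    have hrw : w ^ (-2 : ℝ) = (w ^ 2)⁻¹ := by
      rw [show (-2 : ℝ) = ((-2 : ℤ) : ℝ) by norm_num, Real.rpow_intCast, zpow_neg]
      norm_cast
    rw [hrw, ← div_eq_mul_inv]
    exact hb' w (le_of_lt hw)
  have hIoi : IntegrableOn h (Ioi 1) :=
    key h hc fun w hw => hb w (by linarith)
  have hIic : IntegrableOn h (Iic (-1)) := by
    rw [← Measure.map_neg_eq_self (volume : Measure ℝ)]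
    have m : MeasurableEmbedding fun x : ℝ => -x := (Homeomorph.neg ℝ).measurableEmbedding
    rw [m.integrableOn_map_iff]
    have hpre : (fun x : ℝ => -x) ⁻¹' Iic (-1) = Ici 1 := by
      ext x; simp
    rw [hpre]
    rw [integrableOn_Ici_iff_integrableOn_Ioi]
    apply key (h ∘ fun x => -x) (hc.comp continuous_neg)
    intro w hw
    have := hb (-w) (by intro h0; rw [neg_eq_zero] at h0; linarith)
    simpa using this
  have hIcc : IntegrableOn h (Icc (-1) 1) := hc.integrableOn_Icc
  have huniv : Iic (-1 : ℝ) ∪ (Icc (-1) 1 ∪ Ioi 1) = univ := by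
    ext x
    simp only [mem_union, mem_Iic, mem_Icc, mem_Ioi, mem_univ, iff_true]
    rcases le_total x (-1) with h1 | h1
    · exact Or.inl h1
    rcases le_total x 1 with h2 | h2
    · exact Or.inr (Or.inl ⟨h1, h2⟩)
    rcases eq_or_lt_of_le h2 with h3 | h3
    · exact Or.inr (Or.inl ⟨by linarith, by linarith⟩)
    · exact Or.inr (Or.inr h3)
  rw [← integrableOn_univ, ← huniv]
  exact hIic.union (hIcc.union hIoi)

lemma integrable_fourier_g {a : ℝ} (ha : 0 < a) : Integrable (𝓕 (g a)) :=
  integrable_of_decay _ (continuous_fourier (integrable_g ha))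
    ((∫ x : ℝ, ‖((G₂ a x : ℝ) : ℂ)‖) / (4 * π ^ 2)) fun w hw => fourier_g_decay ha hw

lemma two_cosh_eq (s : ℝ) : u s = Real.exp (-(s / 2)) * (1 + Real.exp s) := by
  unfold u
  rw [Real.cosh_eq, mul_add, mul_one, ← Real.exp_add, show -(s / 2) + s = s / 2 by ring]
  ring

lemma G_eq_exp (a s : ℝ) : G a s = Real.exp (a * s - 2 * a * Real.log (1 + Real.exp s)) := by
  unfold G
  rw [Real.rpow_def_of_pos (u_pos s), two_cosh_eq,
    Real.log_mul (Real.exp_ne_zero _) (by positivity), Real.log_exp]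
  congr 1; ring

def φ (s : ℝ) : ℝ := Real.exp s / (1 + Real.exp s)

def φ' (s : ℝ) : ℝ := Real.exp s / (1 + Real.exp s) ^ 2

lemma hasDerivAt_φ (s : ℝ) : HasDerivAt φ (φ' s) s := by
  have h1 := Real.hasDerivAt_exp s
  have h2 : HasDerivAt (fun y : ℝ => 1 + Real.exp y) (Real.exp s) s :=
    (Real.hasDerivAt_exp s).const_add 1
  have h3 := h1.div h2 (by positivity)
  refine h3.congr_deriv ?_
  unfold φ'
  field_simp
  ring

lemma strictMono_φ : StrictMono φ := by
  intro s t hst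
  unfold φ
  rw [div_lt_div_iff₀ (by positivity) (by positivity)]
  have h := Real.exp_lt_exp.2 hst
  nlinarith [Real.exp_pos s, Real.exp_pos t]

lemma φ_mem (s : ℝ) : φ s ∈ Ioo (0 : ℝ) 1 := by
  constructor
  · unfold φ; positivity
  · unfold φ
    rw [div_lt_one (by positivity)]
    linarith [Real.exp_pos s]

lemma image_φ : φ '' univ = Ioo 0 1 := by
  apply Subset.antisymm
  · rintro _ ⟨s, -, rfl⟩; exact φ_mem s
  · rintro y ⟨hy0, hy1⟩
    refine ⟨Real.log (y / (1 - y)), mem_univ _, ?_⟩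
    unfold φ
    have h1y : (0 : ℝ) < 1 - y := by linarith
    rw [Real.exp_log (div_pos hy0 h1y)]
    field_simp
    ring

lemma pointwise_eq (a t : ℝ) (s : ℝ) :
    |φ' s| • ((↑(φ s) : ℂ) ^ (↑a + Complex.I * ↑t - 1) *
        (1 - (↑(φ s) : ℂ)) ^ (↑a - Complex.I * ↑t - 1))
      = Complex.exp (Complex.I * ↑t * ↑s) * (G a s : ℂ) := by
  have hE := Real.exp_pos s
  have h1E : (0 : ℝ) < 1 + Real.exp s := by linarith
  have hx0 : 0 < φ s := (φ_mem s).1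
  have hx1 : φ s < 1 := (φ_mem s).2
  have h1x : (1 : ℝ) - φ s = (1 + Real.exp s)⁻¹ := by unfold φ; field_simp; ring
  have hphi' : φ' s = φ s * (1 - φ s) := by
    rw [h1x]; unfold φ φ'; field_simp
  have habs : |φ' s| = φ s * (1 - φ s) := by
    rw [hphi', abs_of_pos (by nlinarith)]
  have hXne : ((φ s : ℝ) : ℂ) ≠ 0 := Complex.ofReal_ne_zero.2 hx0.ne'
  have hYcast : (1 : ℂ) - ↑(φ s) = ((1 - φ s : ℝ) : ℂ) := by push_cast; ring
  have hYne : ((1 - φ s : ℝ) : ℂ) ≠ 0 := Complex.ofReal_ne_zero.2 (by nlinarith)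
  have hlogxr : Real.log (φ s) = s - Real.log (1 + Real.exp s) := by
    unfold φ; rw [Real.log_div hE.ne' h1E.ne', Real.log_exp]
  have hlogyr : Real.log (1 - φ s) = -Real.log (1 + Real.exp s) := by
    rw [h1x, Real.log_inv]
  have hXexp : ((φ s : ℝ) : ℂ) = Complex.exp ↑(s - Real.log (1 + Real.exp s)) := by
    rw [← hlogxr, ← Complex.ofReal_exp, Real.exp_log hx0]
  have hYexp : ((1 - φ s : ℝ) : ℂ) = Complex.exp ↑(-Real.log (1 + Real.exp s)) := by
    rw [← hlogyr, ← Complex.ofReal_exp, Real.exp_log (by nlinarith)]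
  have hGexp : ((G a s : ℝ) : ℂ)
      = Complex.exp ↑(a * s - 2 * a * Real.log (1 + Real.exp s)) := by
    rw [G_eq_exp, Complex.ofReal_exp]
  have hlogx : Complex.log ↑(φ s) = ↑(s - Real.log (1 + Real.exp s)) := by
    rw [← Complex.ofReal_log hx0.le, hlogxr]
  have hlogy : Complex.log ((1 - φ s : ℝ) : ℂ) = ↑(-Real.log (1 + Real.exp s)) := by
    rw [← Complex.ofReal_log (by nlinarith : (0:ℝ) ≤ 1 - φ s), hlogyr]
  rw [hYcast, Complex.cpow_def_of_ne_zero hXne, Complex.cpow_def_of_ne_zero hYne,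
    hlogx, hlogy, habs, Complex.real_smul, Complex.ofReal_mul, hXexp, hYexp, hGexp]
  rw [show Complex.exp ↑(s - Real.log (1 + Real.exp s)) *
      Complex.exp ↑(-Real.log (1 + Real.exp s)) *
      (Complex.exp (↑(s - Real.log (1 + Real.exp s)) * (↑a + Complex.I * ↑t - 1)) *
        Complex.exp (↑(-Real.log (1 + Real.exp s)) * (↑a - Complex.I * ↑t - 1)))
      = Complex.exp (↑(s - Real.log (1 + Real.exp s)) + ↑(-Real.log (1 + Real.exp s))
          + (↑(s - Real.log (1 + Real.exp s)) * (↑a + Complex.I * ↑t - 1)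
            + ↑(-Real.log (1 + Real.exp s)) * (↑a - Complex.I * ↑t - 1)))
      from by rw [Complex.exp_add, Complex.exp_add, Complex.exp_add]]
  rw [← Complex.exp_add]
  congr 1
  push_cast
  ring

lemma beta_line {a : ℝ} (ha : 0 < a) (t : ℝ) :
    Complex.betaIntegral (↑a + Complex.I * ↑t) (↑a - Complex.I * ↑t)
      = ∫ s : ℝ, Complex.exp (Complex.I * ↑t * ↑s) * (G a s : ℂ) := by
  rw [Complex.betaIntegral, intervalIntegral.integral_of_le zero_le_one,
    MeasureTheory.integral_Ioc_eq_integral_Ioo, ← image_φ,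
    integral_image_eq_integral_abs_deriv_smul MeasurableSet.univ
      (fun x _ => (hasDerivAt_φ x).hasDerivWithinAt) (strictMono_φ.injective.injOn),
    MeasureTheory.setIntegral_univ]
  exact MeasureTheory.integral_congr_ae (Filter.Eventually.of_forall fun s => pointwise_eq a t s)

lemma gamma_eq {a : ℝ} (ha : 0 < a) (t : ℝ) :
    Complex.Gamma (↑a + Complex.I * ↑t) * Complex.Gamma (↑a - Complex.I * ↑t)
      = Complex.Gamma (2 * ↑a) * ∫ s : ℝ, Complex.exp (Complex.I * ↑t * ↑s) * (G a s : ℂ) := by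
  have hu : 0 < (↑a + Complex.I * ↑t).re := by simp [ha]
  have hv : 0 < (↑a - Complex.I * ↑t).re := by simp [ha]
  rw [Complex.Gamma_mul_Gamma_eq_betaIntegral hu hv, beta_line ha t]
  congr 2
  push_cast
  ring

end RamanujanAux

end

open RamanujanAux in
theorem ramanujan_formula_real (a : ℝ) (ha : 0 < a) (ξ : ℝ) :
    ∫ t : ℝ, ((‖Complex.Gamma (a + Complex.I * t)‖ ^ 2 : ℝ) : ℂ) *
        Complex.exp (-Complex.I * ξ * t) =
      ((Real.sqrt Real.pi * Real.Gamma a * Real.Gamma (a + 1 / 2) *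
        Real.cosh (ξ / 2) ^ (-(2 * a)) : ℝ) : ℂ) := by
  have key1 : ∀ t : ℝ, ((‖Complex.Gamma (↑a + Complex.I * ↑t)‖ ^ 2 : ℝ) : ℂ)
      = Complex.Gamma (↑a + Complex.I * ↑t) * Complex.Gamma (↑a - Complex.I * ↑t) := by
    intro t
    have hconj : (starRingEnd ℂ) (↑a + Complex.I * ↑t) = ↑a - Complex.I * ↑t := by
      simp [Complex.ext_iff]
    calc ((‖Complex.Gamma (↑a + Complex.I * ↑t)‖ ^ 2 : ℝ) : ℂ)
        = ↑(Complex.normSq (Complex.Gamma (↑a + Complex.I * ↑t))) := by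
          rw [← Complex.sq_norm]
      _ = Complex.Gamma (↑a + Complex.I * ↑t)
            * (starRingEnd ℂ) (Complex.Gamma (↑a + Complex.I * ↑t)) := (Complex.mul_conj _).symm
      _ = Complex.Gamma (↑a + Complex.I * ↑t) * Complex.Gamma (↑a - Complex.I * ↑t) := by
          rw [← Complex.Gamma_conj, hconj]
  have key2 : ∀ t : ℝ, (∫ s : ℝ, Complex.exp (Complex.I * ↑t * ↑s) * (G a s : ℂ))
      = 𝓕 (g a) (-(t / (2 * π))) := by
    intro t
    rw [Real.fourier_real_eq_integral_exp_smul]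
    apply MeasureTheory.integral_congr_ae
    filter_upwards with s
    rw [smul_eq_mul]
    congr 1
    rw [show (-2) * π * s * (-(t / (2 * π))) = t * s from by field_simp]
    push_cast
    ring_nf
  set Φ : ℝ → ℂ := fun t => 𝓕 (g a) (-(t / (2 * π))) * Complex.exp (-Complex.I * ↑ξ * ↑t) with hΦ
  have hstep1 : (∫ t : ℝ, ((‖Complex.Gamma (↑a + Complex.I * ↑t)‖ ^ 2 : ℝ) : ℂ) *
      Complex.exp (-Complex.I * ↑ξ * ↑t)) = Complex.Gamma (2 * ↑a) * ∫ t : ℝ, Φ t := by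
    rw [← MeasureTheory.integral_const_mul]
    apply MeasureTheory.integral_congr_ae
    filter_upwards with t
    rw [key1 t, gamma_eq ha t, key2 t, hΦ]
    ring
  rw [hstep1]
  have hcomp := MeasureTheory.Measure.integral_comp_mul_left Φ (-(2 * π))
  have h2pi : |(-(2 * π))⁻¹| = (2 * π)⁻¹ := by
    rw [abs_inv, abs_neg, abs_of_pos (by positivity)]
  rw [h2pi] at hcomp
  have hΦint : (∫ t : ℝ, Φ t) = (2 * π) • ∫ x : ℝ, Φ (-(2 * π) * x) := by
    rw [hcomp, smul_smul]
    rw [show (2 * π) * (2 * π)⁻¹ = 1 from mul_inv_cancel₀ (by positivity)]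
    rw [one_smul]
  have key3 : (∫ x : ℝ, Φ (-(2 * π) * x)) = 𝓕⁻ (𝓕 (g a)) ξ := by
    rw [Real.fourierInv_eq']
    apply MeasureTheory.integral_congr_ae
    filter_upwards with x
    rw [hΦ]
    simp only
    rw [show -(-(2 * π) * x / (2 * π)) = x from by field_simp]
    rw [smul_eq_mul, mul_comm]
    congr 1
    rw [show (inner ℝ x ξ : ℝ) = x * ξ from by simp [mul_comm]]
    push_cast
    ring
  have key4 : 𝓕⁻ (𝓕 (g a)) ξ = g a ξ :=
    (integrable_g ha).fourierInv_fourier_eq (integrable_fourier_g ha)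
      ((Complex.continuous_ofReal.comp (continuous_G a)).continuousAt)
  rw [hΦint, key3, key4]
  have hGamma2 : Complex.Gamma (2 * (a : ℂ)) = ((Real.Gamma (2 * a) : ℝ) : ℂ) := by
    rw [show (2 * (a : ℂ)) = ((2 * a : ℝ) : ℂ) from by push_cast; ring, Complex.Gamma_ofReal]
  rw [hGamma2, show (g a ξ) = ((G a ξ : ℝ) : ℂ) from rfl, Complex.real_smul]
  rw [show ((Real.Gamma (2 * a) : ℝ) : ℂ) * (((2 * π : ℝ) : ℂ) * ((G a ξ : ℝ) : ℂ))
    = (((Real.Gamma (2 * a) * (2 * π * G a ξ) : ℝ)) : ℂ) from by push_cast; ring]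
  congr 1
  have hdup := Real.Gamma_mul_Gamma_add_half a
  have hcosh : G a ξ = 2 ^ (-(2 * a)) * Real.cosh (ξ / 2) ^ (-(2 * a)) := by
    unfold G u
    rw [Real.mul_rpow (by norm_num) (Real.cosh_pos _).le]
  have h2 : (2 : ℝ) ^ (1 - 2 * a) = 2 * 2 ^ (-(2 * a)) := by
    rw [show (1 - 2 * a) = 1 + -(2 * a) from by ring, Real.rpow_add two_pos, Real.rpow_one]
  have hsqrt : Real.sqrt π * Real.sqrt π = π := Real.mul_self_sqrt Real.pi_pos.le
  rw [hcosh, show Real.sqrt π * Real.Gamma a * Real.Gamma (a + 1 / 2)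
      * Real.cosh (ξ / 2) ^ (-(2 * a))
    = Real.sqrt π * (Real.Gamma a * Real.Gamma (a + 1 / 2))
      * Real.cosh (ξ / 2) ^ (-(2 * a)) from by ring, hdup, h2]
  linear_combination (-2 * Real.Gamma (2 * a) * (2 : ℝ) ^ (-(2 * a))
    * Real.cosh (ξ / 2) ^ (-(2 * a))) * hsqrt
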